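/- There exists a half pebbling (fractional pebbling with all weights in {0, 1/2, 1}) of the balanced binary tree of height h ≥ 2 that starts with no pebbles, ends with no pebbles, at some time has pebble weight 1 on the root, and uses total pebble weight at most h/2 + 1 at every time. -/

import Mathlib

/-- Number of nodes of the complete d-ary tree of height h (levels 0..h-1). -/
def treeSize (d h : ℕ) : ℕ := ∑ k ∈ Finset.range h, d ^ k

/-- A fractional configuration: each node gets (black weight, white weight). -/
abbrev Cfg := ℕ → ℝ × ℝ

/-- Pebble weight of node i: b(i) + w(i). -/
def pw (c : Cfg) (i : ℕ) : ℝ := (c i).1 + (c i).2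

/-- Valid configuration: weights nonnegative, b(i)+w(i) ≤ 1, nothing outside the tree. -/
def Valid (n : ℕ) (c : Cfg) : Prop :=
  (∀ i, 0 ≤ (c i).1 ∧ 0 ≤ (c i).2 ∧ pw c i ≤ 1) ∧ (∀ i, n ≤ i → c i = (0, 0))

/-- Total pebble weight of a configuration. -/
def weight (n : ℕ) (c : Cfg) : ℝ := ∑ i ∈ Finset.range n, pw c i

/-- j is a child of i in heap indexing of the d-ary tree. -/
def child (d i j : ℕ) : Prop := ∃ k, k < d ∧ j = d * i + 1 + k

def isLeaf (d n i : ℕ) : Prop := i < n ∧ n ≤ d * i + 1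

/-- Every child of i has pebble weight 1. -/
def covered (d : ℕ) (c : Cfg) (i : ℕ) : Prop := ∀ j, child d i j → pw c j = 1

/-- Legal fractional pebbling moves: decrease black weight on any node; on a node
whose children all have pebble weight 1, set its white weight to 0 and increase its
black weight arbitrarily, optionally simultaneously decreasing children's black
weights (sliding); increase white weight on any node (subject to validity);
increase black weight on any leaf. -/
def Move (d n : ℕ) (c c' : Cfg) : Prop :=
  (∃ i, (c' i).1 ≤ (c i).1 ∧ (c' i).2 = (c i).2 ∧ ∀ j, j ≠ i → c' j = c j) ∨
  (∃ i, i < n ∧ covered d c i ∧ (c i).1 ≤ (c' i).1 ∧ (c' i).2 = 0 ∧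
    (∀ j, child d i j → (c' j).1 ≤ (c j).1 ∧ (c' j).2 = (c j).2) ∧
    (∀ j, j ≠ i → ¬ child d i j → c' j = c j)) ∨
  (∃ i, (c' i).1 = (c i).1 ∧ (c i).2 ≤ (c' i).2 ∧ ∀ j, j ≠ i → c' j = c j) ∨
  (∃ i, isLeaf d n i ∧ (c' i).2 = (c i).2 ∧ (c i).1 ≤ (c' i).1 ∧ ∀ j, j ≠ i → c' j = c j)

/-- A fractional pebbling: valid configurations connected by legal moves. -/
def Pebbling (d n T : ℕ) (c : ℕ → Cfg) : Prop :=
  (∀ t, t ≤ T → Valid n (c t)) ∧ (∀ t, t < T → Move d n (c t) (c (t + 1)))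

def EmptyCfg (c : Cfg) : Prop := ∀ i, c i = (0, 0)

/-- Root-pebbling: starts and ends empty; at some time the root has pebble weight 1. -/
def RootPebbling (d n T : ℕ) (c : ℕ → Cfg) : Prop :=
  Pebbling d n T c ∧ EmptyCfg (c 0) ∧ EmptyCfg (c T) ∧ ∃ t, t ≤ T ∧ pw (c t) 0 = 1

/-- x is a half-pebbling value. -/
def HalfVal (x : ℝ) : Prop := x = 0 ∨ x = 1 / 2 ∨ x = 1

/-- Half pebbling moves: like fractional moves, except white weight is added so
that the node's pebble weight becomes exactly 1. -/
def MoveH (d n : ℕ) (c c' : Cfg) : Prop :=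
  (∃ i, (c' i).1 ≤ (c i).1 ∧ (c' i).2 = (c i).2 ∧ ∀ j, j ≠ i → c' j = c j) ∨
  (∃ i, i < n ∧ covered d c i ∧ (c i).1 ≤ (c' i).1 ∧ (c' i).2 = 0 ∧
    (∀ j, child d i j → (c' j).1 ≤ (c j).1 ∧ (c' j).2 = (c j).2) ∧
    (∀ j, j ≠ i → ¬ child d i j → c' j = c j)) ∨
  (∃ i, (c' i).1 = (c i).1 ∧ (c i).2 ≤ (c' i).2 ∧ pw c' i = 1 ∧ ∀ j, j ≠ i → c' j = c j) ∨
  (∃ i, isLeaf d n i ∧ (c' i).2 = (c i).2 ∧ (c i).1 ≤ (c' i).1 ∧ ∀ j, j ≠ i → c' j = c j)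

/-- A half pebbling: all weights in {0, 1/2, 1}, valid, connected by half moves. -/
def HPebbling (d n T : ℕ) (c : ℕ → Cfg) : Prop :=
  (∀ t, t ≤ T → Valid n (c t) ∧ ∀ i, HalfVal ((c t) i).1 ∧ HalfVal ((c t) i).2) ∧
  (∀ t, t < T → MoveH d n (c t) (c (t + 1)))


noncomputable section
open Classical

/-- update a configuration at one node -/
def updC (c : Cfg) (i : ℕ) (p : ℝ × ℝ) : Cfg := fun j => if j = i then p else c j

/-- j is a proper descendant of v in heap indexing (binary). -/
def pDesc (v j : ℕ) : Prop := ∃ t, 0 < t ∧ (j+1) / 2^t = v+1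

/-- j is a (weak) descendant of v. -/
def Descd (v j : ℕ) : Prop := ∃ t, (j+1) / 2^t = v+1

/-- override c by d on proper descendants of v -/
def ovr (v : ℕ) (d c : Cfg) : Cfg := fun j => if pDesc v j then d j else c j

def Good (n : ℕ) (c : Cfg) : Prop := Valid n c ∧ ∀ i, HalfVal ((c i).1) ∧ HalfVal ((c i).2)

def ZeroOn (c : Cfg) (P : ℕ → Prop) : Prop := ∀ j, P j → c j = (0, 0)

def Reach (n : ℕ) (B : ℝ) (c c' : Cfg) : Prop :=
  ∃ T : ℕ, ∃ s : ℕ → Cfg, s 0 = c ∧ s T = c' ∧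
    (∀ t, t ≤ T → Good n (s t) ∧ weight n (s t) ≤ B) ∧
    (∀ t, t < T → MoveH 2 n (s t) (s (t+1)))

lemma Reach.refl {n : ℕ} {B : ℝ} {c : Cfg} (hg : Good n c) (hw : weight n c ≤ B) :
    Reach n B c c := by
  refine ⟨0, fun _ => c, rfl, rfl, fun t _ => ⟨hg, hw⟩, fun t ht => absurd ht (by omega)⟩

lemma Reach.single {n : ℕ} {B : ℝ} {c c' : Cfg} (hg : Good n c) (hg' : Good n c')
    (hw : weight n c ≤ B) (hw' : weight n c' ≤ B) (hm : MoveH 2 n c c') :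
    Reach n B c c' := by
  refine ⟨1, fun t => if t = 0 then c else c', by simp, by simp, ?_, ?_⟩
  · intro t ht
    by_cases h : t = 0
    · simp only [h, if_pos rfl]; exact ⟨hg, hw⟩
    · simp only [if_neg h]; exact ⟨hg', hw'⟩
  · intro t ht
    have h0 : t = 0 := by omega
    subst h0
    simpa using hm

lemma Reach.concat {n : ℕ} {B : ℝ} {c c' c'' : Cfg}
    (h1 : Reach n B c c') (h2 : Reach n B c' c'') :
    ∃ T : ℕ, ∃ s : ℕ → Cfg, s 0 = c ∧ s T = c'' ∧
      (∀ t, t ≤ T → Good n (s t) ∧ weight n (s t) ≤ B) ∧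
      (∀ t, t < T → MoveH 2 n (s t) (s (t+1))) ∧
      ∃ t, t ≤ T ∧ s t = c' := by
  obtain ⟨T1, s1, e10, e11, g1, m1⟩ := h1
  obtain ⟨T2, s2, e20, e21, g2, m2⟩ := h2
  set s : ℕ → Cfg := fun t => if t ≤ T1 then s1 t else s2 (t - T1) with hs
  have hlow : ∀ t, t ≤ T1 → s t = s1 t := by intro t ht; simp [hs, ht]
  have hhigh : ∀ t, T1 ≤ t → s t = s2 (t - T1) := by
    intro t ht
    by_cases h : t ≤ T1
    · have : t = T1 := by omega
      subst this
      simp [hs, e11, ← e20]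
    · simp [hs, h]
  refine ⟨T1 + T2, s, ?_, ?_, ?_, ?_, ⟨T1, by omega, by rw [hlow T1 le_rfl, e11]⟩⟩
  · rw [hlow 0 (by omega), e10]
  · rw [hhigh (T1+T2) (by omega)]; simpa using e21
  · intro t ht
    by_cases h : t ≤ T1
    · rw [hlow t h]; exact g1 t h
    · rw [hhigh t (by omega)]; exact g2 (t - T1) (by omega)
  · intro t ht
    by_cases h : t + 1 ≤ T1
    · rw [hlow t (by omega), hlow (t+1) h]; exact m1 t (by omega)
    · rw [hhigh (t+1) (by omega)]
      by_cases h3 : t ≤ T1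
      · have : t = T1 := by omega
        subst this
        rw [hlow t le_rfl, e11, ← e20]
        have : t + 1 - t = 0 + 1 := by omega
        rw [this]
        exact m2 0 (by omega)
      · rw [hhigh t (by omega)]
        have : t + 1 - T1 = (t - T1) + 1 := by omega
        rw [this]
        exact m2 (t - T1) (by omega)

lemma Reach.trans {n : ℕ} {B : ℝ} {c c' c'' : Cfg}
    (h1 : Reach n B c c') (h2 : Reach n B c' c'') : Reach n B c c'' := by
  obtain ⟨T, s, e0, e1, g, m, _⟩ := h1.concat h2
  exact ⟨T, s, e0, e1, g, m⟩

lemma Reach.mono {n : ℕ} {B B' : ℝ} {c c' : Cfg} (h : Reach n B c c') (hB : B ≤ B') :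
    Reach n B' c c' := by
  obtain ⟨T, s, e0, e1, g, m⟩ := h
  exact ⟨T, s, e0, e1, fun t ht => ⟨(g t ht).1, le_trans (g t ht).2 hB⟩, m⟩

lemma Reach.good_left {n : ℕ} {B : ℝ} {c c' : Cfg} (h : Reach n B c c') : Good n c := by
  obtain ⟨T, s, e0, e1, g, m⟩ := h
  exact e0 ▸ (g 0 (by omega)).1

lemma Reach.good_right {n : ℕ} {B : ℝ} {c c' : Cfg} (h : Reach n B c c') : Good n c' := by
  obtain ⟨T, s, e0, e1, g, m⟩ := h
  exact e1 ▸ (g T (by omega)).1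

lemma Reach.w_left {n : ℕ} {B : ℝ} {c c' : Cfg} (h : Reach n B c c') : weight n c ≤ B := by
  obtain ⟨T, s, e0, e1, g, m⟩ := h
  exact e0 ▸ (g 0 (by omega)).2

lemma Reach.w_right {n : ℕ} {B : ℝ} {c c' : Cfg} (h : Reach n B c c') : weight n c' ≤ B := by
  obtain ⟨T, s, e0, e1, g, m⟩ := h
  exact e1 ▸ (g T (by omega)).2

lemma updC_self (c : Cfg) (i : ℕ) (p : ℝ × ℝ) : updC c i p i = p := by simp [updC]

lemma updC_ne (c : Cfg) {i j : ℕ} (p : ℝ × ℝ) (h : j ≠ i) : updC c i p j = c j := by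
  simp [updC, h]

lemma pw_updC (c : Cfg) (i : ℕ) (p : ℝ × ℝ) (j : ℕ) :
    pw (updC c i p) j = if j = i then p.1 + p.2 else pw c j := by
  by_cases h : j = i <;> simp [pw, updC, h]

lemma weight_updC (n : ℕ) (c : Cfg) {i : ℕ} (hi : i < n) (p : ℝ × ℝ) :
    weight n (updC c i p) = weight n c + (p.1 + p.2) - pw c i := by
  have h1 : weight n (updC c i p)
      = (p.1 + p.2) + ∑ j ∈ (Finset.range n).erase i, pw c j := by
    rw [weight]
    have e : (fun j => pw (updC c i p) j) = Function.update (pw c) i (p.1 + p.2) := by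
      funext j
      rw [pw_updC]
      by_cases h : j = i <;> simp [Function.update, h]
    calc ∑ j ∈ Finset.range n, pw (updC c i p) j
        = ∑ j ∈ Finset.range n, Function.update (pw c) i (p.1 + p.2) j := by
          rw [show (fun j => pw (updC c i p) j) = _ from e]
      _ = _ := by
          rw [Finset.sum_update_of_mem (Finset.mem_range.2 hi), Finset.erase_eq]
  have h2 : pw c i + ∑ j ∈ (Finset.range n).erase i, pw c j = weight n c :=
    Finset.add_sum_erase _ _ (Finset.mem_range.2 hi)
  rw [h1, ← h2]; ring

lemma HalfVal.nonneg {x : ℝ} (h : HalfVal x) : 0 ≤ x := by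
  rcases h with h|h|h <;> norm_num [h]

lemma HalfVal.le_one {x : ℝ} (h : HalfVal x) : x ≤ 1 := by
  rcases h with h|h|h <;> norm_num [h]

lemma Good.updC {n : ℕ} {c : Cfg} (hg : Good n c) {i : ℕ} (hi : i < n) {p : ℝ × ℝ}
    (h1 : HalfVal p.1) (h2 : HalfVal p.2) (h3 : p.1 + p.2 ≤ 1) : Good n (updC c i p) := by
  obtain ⟨⟨v1, v2⟩, hh⟩ := hg
  refine ⟨⟨fun j => ?_, fun j hj => ?_⟩, fun j => ?_⟩
  · by_cases h : j = i
    · subst h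
      simp only [pw, updC_self]
      exact ⟨h1.nonneg, h2.nonneg, h3⟩
    · simp only [pw, updC_ne _ _ h]
      exact v1 j
  · have h : j ≠ i := by omega
    rw [updC_ne _ _ h]
    exact v2 j hj
  · by_cases h : j = i
    · subst h; rw [updC_self]; exact ⟨h1, h2⟩
    · rw [updC_ne _ _ h]; exact hh j

end

section descle

lemma two_pow_div_div (m t s : ℕ) : m / 2^t / 2^s = m / 2^(t+s) := by
  rw [Nat.div_div_eq_div_mul, ← pow_add]

lemma descd_self (v : ℕ) : Descd v v := ⟨0, by simp⟩

lemma pDesc.descd {v j : ℕ} (h : pDesc v j) : Descd v j := ⟨h.choose, h.choose_spec.2⟩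

lemma descd_child {v j e : ℕ} (he : e < 2) (h : Descd (2*v+1+e) j) : pDesc v j := by
  obtain ⟨t, ht⟩ := h
  refine ⟨t+1, by omega, ?_⟩
  rw [← two_pow_div_div, ht]
  omega

lemma pDesc_child (v : ℕ) {e : ℕ} (he : e < 2) : pDesc v (2*v+1+e) :=
  descd_child he (descd_self _)

lemma descd_le {x j : ℕ} (h : Descd x j) : x ≤ j := by
  obtain ⟨t, ht⟩ := h
  have := Nat.div_le_self (j+1) (2^t)
  omega

lemma descd_comp {x y j : ℕ} (hx : Descd x j) (hy : Descd y j) :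
    Descd x y ∨ Descd y x := by
  obtain ⟨t, ht⟩ := hx
  obtain ⟨s, hs⟩ := hy
  rcases le_total t s with h | h
  · right
    refine ⟨s - t, ?_⟩
    rw [← ht, two_pow_div_div, show t + (s-t) = s by omega, hs]
  · left
    refine ⟨t - s, ?_⟩
    rw [← hs, two_pow_div_div, show s + (t-s) = t by omega, ht]

lemma not_descd_sib {v : ℕ} {e f : ℕ} (he : e < 2) (hf : f < 2) (hef : e ≠ f) :
    ¬ Descd (2*v+1+e) (2*v+1+f) := by
  rintro ⟨t, ht⟩
  match t with
  | 0 => simp at ht; omega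
  | (s+1) =>
    have h2 : 2 ≤ 2^(s+1) := by
      have := Nat.one_le_two_pow (n := s)
      calc 2 = 2 * 1 := by omega
        _ ≤ 2 * 2^s := by omega
        _ = 2^(s+1) := by ring
    have hle : (2*v+1+f+1) / 2^(s+1) ≤ (2*v+1+f+1) / 2 :=
      Nat.div_le_div_left h2 (by omega)
    have : (2*v+1+f+1)/2 = v + 1 := by omega
    omega

lemma not_pDesc_self (v : ℕ) : ¬ pDesc v v := by
  rintro ⟨t, ht, he⟩
  match t with
  | 0 => omega
  | (s+1) =>
    have h2 : 2 ≤ 2^(s+1) := by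
      have := Nat.one_le_two_pow (n := s)
      calc 2 = 2 * 1 := by omega
        _ ≤ 2 * 2^s := by omega
        _ = 2^(s+1) := by ring
    have hle : (v+1) / 2^(s+1) ≤ (v+1) / 2 := Nat.div_le_div_left h2 (by omega)
    have : (v+1)/2 < v+1 := Nat.div_lt_self (by omega) (by omega)
    omega

lemma pDesc.ne {v j : ℕ} (h : pDesc v j) : j ≠ v := by
  rintro rfl; exact not_pDesc_self _ h

/-- descendants of the two children are disjoint -/
lemma descd_disj {v j : ℕ} (h1 : Descd (2*v+1) j) (h2 : Descd (2*v+2) j) : False := by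
  rcases descd_comp h1 h2 with h | h
  · have h0 : Descd (2*v+1+0) (2*v+1+1) := by simpa using h
    exact not_descd_sib (by omega) (by omega) (by omega) h0
  · have h0 : Descd (2*v+1+1) (2*v+1+0) := by simpa using h
    exact not_descd_sib (by omega) (by omega) (by omega) h0

lemma not_descd_high {x j : ℕ} (h : j < x) : ¬ Descd x j := fun hd => by
  have := descd_le hd; omega

/-- height predicate: the subtree rooted at v has height exactly k
    inside the complete binary tree of height h -/
def Ht (h k v : ℕ) : Prop := (v+1) * 2^(k-1) < 2^h ∧ 2^h ≤ (v+1) * 2^k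

lemma ht_children {h k v : ℕ} (hk : 1 ≤ k) (hv : Ht h (k+1) v) :
    Ht h k (2*v+1) ∧ Ht h k (2*v+2) := by
  obtain ⟨h1, h2⟩ := hv
  rw [show k + 1 - 1 = k by omega] at h1
  have hkh : k < h := by
    have hp : (2:ℕ)^k < 2^h := lt_of_le_of_lt (Nat.le_mul_of_pos_left _ (by omega)) h1
    exact (Nat.pow_lt_pow_iff_right (by omega)).1 hp
  have epow : (2:ℕ)^h = 2^(h-k) * 2^k := by rw [← pow_add]; congr 1; omega
  have hv1 : v + 1 < 2^(h-k) := by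
    rw [epow] at h1
    exact Nat.lt_of_mul_lt_mul_right h1
  have e1 : (2*v+1+1) * 2^(k-1) = (v+1) * 2^k := by
    have : (2:ℕ)^k = 2 * 2^(k-1) := by
      rw [← pow_succ']; congr 1; omega
    rw [this]; ring
  have e2 : (2*v+2+1) * 2^(k-1) < 2^h := by
    have : (2*v+2+1) * 2^(k-1) < (v+2) * 2^k := by
      have : (2:ℕ)^k = 2 * 2^(k-1) := by rw [← pow_succ']; congr 1; omega
      rw [this, show (v+2) * (2 * 2^(k-1)) = (2*v+4) * 2^(k-1) by ring]
      have hp : (0:ℕ) < 2^(k-1) := Nat.pow_pos (by omega)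
      exact Nat.mul_lt_mul_of_lt_of_le (by omega) le_rfl hp
    calc (2*v+2+1) * 2^(k-1) < (v+2) * 2^k := this
      _ ≤ 2^(h-k) * 2^k := Nat.mul_le_mul_right _ (by omega)
      _ = 2^h := epow.symm
  refine ⟨⟨by rw [e1]; exact h1, ?_⟩, ⟨e2, ?_⟩⟩
  · calc (2:ℕ)^h ≤ (v+1) * 2^(k+1) := h2
      _ = (2*v+1+1) * 2^k := by rw [pow_succ]; ring
  · calc (2:ℕ)^h ≤ (v+1) * 2^(k+1) := h2
      _ = (2*v+2) * 2^k := by rw [pow_succ]; ring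
      _ ≤ (2*v+2+1) * 2^k := Nat.mul_le_mul_right _ (by omega)

lemma ht_root {h : ℕ} (hh : 1 ≤ h) : Ht h h 0 := by
  constructor
  · simp only [Nat.zero_add, one_mul]
    exact Nat.pow_lt_pow_right (by omega) (by omega)
  · simp

lemma ht_v_lt {h k v n : ℕ} (hn : n + 1 = 2^h) (hv : Ht h k v) : v < n := by
  obtain ⟨h1, _⟩ := hv
  have : v + 1 ≤ (v+1) * 2^(k-1) := Nat.le_mul_of_pos_right _ (Nat.pow_pos (by omega))
  omega

lemma ht_children_lt {h k v n : ℕ} (hn : n + 1 = 2^h) (hk : 2 ≤ k) (hv : Ht h k v) :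
    2*v+2 < n := by
  obtain ⟨h1, h2⟩ := hv
  have hp : (2:ℕ) ≤ 2^(k-1) := by
    calc (2:ℕ) = 2^1 := by norm_num
      _ ≤ 2^(k-1) := Nat.pow_le_pow_right (by omega) (by omega)
  have hb : 2*v+2 ≤ (v+1) * 2^(k-1) := by
    calc 2*v+2 = (v+1) * 2 := by ring
      _ ≤ (v+1) * 2^(k-1) := Nat.mul_le_mul_left _ hp
  have hne : h ≠ 0 := by
    rintro rfl
    simp only [pow_zero] at h1
    omega
  obtain ⟨m, hm⟩ := dvd_pow_self 2 hne
  omega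

lemma ht_leaf {h v n : ℕ} (hn : n + 1 = 2^h) (hv : Ht h 1 v) : isLeaf 2 n v := by
  obtain ⟨h1, h2⟩ := hv
  simp only [pow_zero, mul_one, pow_one] at h1 h2
  exact ⟨by omega, by omega⟩

lemma treeSize_two (h : ℕ) : treeSize 2 h + 1 = 2^h := by
  induction h with
  | zero => simp [treeSize]
  | succ m ih =>
    rw [treeSize, Finset.sum_range_succ, ← treeSize]
    rw [pow_succ]
    omega

end descle

section mainpart
open Classical

lemma descd_a {v j : ℕ} (h : Descd (2*v+1) j) : pDesc v j := by
  obtain ⟨t, ht⟩ := h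
  exact ⟨t+1, by omega, by rw [← two_pow_div_div, ht]; omega⟩

lemma descd_b {v j : ℕ} (h : Descd (2*v+2) j) : pDesc v j := by
  obtain ⟨t, ht⟩ := h
  exact ⟨t+1, by omega, by rw [← two_pow_div_div, ht]; omega⟩

lemma pDesc_a (v : ℕ) : pDesc v (2*v+1) := descd_a (descd_self _)
lemma pDesc_b (v : ℕ) : pDesc v (2*v+2) := descd_b (descd_self _)

lemma pDesc_a_sub {v j : ℕ} (h : pDesc (2*v+1) j) : pDesc v j := descd_a h.descd
lemma pDesc_b_sub {v j : ℕ} (h : pDesc (2*v+2) j) : pDesc v j := descd_b h.descd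

lemma not_descd_b_a (v : ℕ) : ¬ Descd (2*v+2) (2*v+1) := not_descd_high (by omega)

lemma not_pDesc_b_a (v : ℕ) : ¬ pDesc (2*v+2) (2*v+1) := fun h => not_descd_b_a v h.descd

lemma pDesc_b_ne_a {v j : ℕ} (h : pDesc (2*v+2) j) : j ≠ 2*v+1 := by
  rintro rfl; exact not_descd_b_a v h.descd

lemma pDesc_b_ne_v {v j : ℕ} (h : pDesc (2*v+2) j) : j ≠ v := by
  have := descd_le h.descd; omega

lemma pDesc_a_ne_v {v j : ℕ} (h : pDesc (2*v+1) j) : j ≠ v := by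
  have := descd_le h.descd; omega

lemma not_pDesc_b_v (v : ℕ) : ¬ pDesc (2*v+2) v := fun h => pDesc_b_ne_v h rfl
lemma not_pDesc_a_v (v : ℕ) : ¬ pDesc (2*v+1) v := fun h => pDesc_a_ne_v h rfl

lemma pDesc_b_not_descd_a {v j : ℕ} (h : pDesc (2*v+2) j) : ¬ Descd (2*v+1) j :=
  fun h' => descd_disj h' h.descd

lemma child_two {v j : ℕ} : child 2 v j ↔ j = 2*v+1 ∨ j = 2*v+2 := by
  constructor
  · rintro ⟨e, he, rfl⟩; omega
  · rintro (rfl | rfl)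
    · exact ⟨0, by omega, by omega⟩
    · exact ⟨1, by omega, by omega⟩

lemma pw_zero {c : Cfg} {j : ℕ} (h : c j = (0,0)) : pw c j = 0 := by simp [pw, h]

/-- the FD-spec: build black 1 on v leaving half-white debts dbt strictly below v;
    and the debts alone can be cleaned up. -/
def FDspec (n k v : ℕ) : Prop :=
  ∃ dbt : Cfg,
    (∀ j, ¬ pDesc v j → dbt j = (0,0)) ∧
    (∀ j, n ≤ j → dbt j = (0,0)) ∧
    (∀ j, (dbt j).1 = 0 ∧ HalfVal (dbt j).2) ∧
    (∀ c : Cfg, Good n c → ZeroOn c (pDesc v) →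
      weight n (ovr v dbt c) = weight n c + ((k:ℝ) - 2)/2) ∧
    (∀ c : Cfg, Good n c → ZeroOn c (Descd v) →
      Reach n (weight n c + (k:ℝ)/2 + 1) c (updC (ovr v dbt c) v (1,0))) ∧
    (∀ c : Cfg, Good n c → ZeroOn c (pDesc v) →
      Reach n (weight n c + (k:ℝ)/2 + 1) (ovr v dbt c) c)

/-- the D-spec: discharge a lone half-white on v. -/
def Dspec (n k v : ℕ) : Prop :=
  ∀ c : Cfg, Good n c → ZeroOn c (pDesc v) → c v = (0, 1/2) →
    Reach n (weight n c + (k:ℝ)/2 + 1) c (updC c v (0,0))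

lemma hv_half : HalfVal (1/2 : ℝ) := Or.inr (Or.inl rfl)
lemma hv_one : HalfVal (1 : ℝ) := Or.inr (Or.inr rfl)
lemma hv_zero : HalfVal (0 : ℝ) := Or.inl rfl

/-- H-lemma: put a half black on v cleanly. -/
lemma Hlem {n k v : ℕ} (hvn : v < n) (hfd : FDspec n k v) :
    ∀ c : Cfg, Good n c → ZeroOn c (Descd v) →
      Reach n (weight n c + (k:ℝ)/2 + 3/2) c (updC c v (1/2, 0)) := by
  obtain ⟨dbt, hd1, hd2, hd3, hS3, hS4, hS5⟩ := hfd
  intro c hg hz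
  set W := weight n c with hW
  have hzp : ZeroOn c (pDesc v) := fun j hj => hz j hj.descd
  have hcv : c v = (0,0) := hz v (descd_self v)
  have hpcv : pw c v = 0 := pw_zero hcv
  -- configs
  set X := updC (ovr v dbt c) v (1,0) with hX
  set Y := updC (ovr v dbt c) v (1/2,0) with hY
  set c' := updC c v (1/2, 0) with hc'
  -- R1 : c → X
  have R1 := hS4 c hg hz
  -- weights
  have wovr : weight n (ovr v dbt c) = W + ((k:ℝ)-2)/2 := hS3 c hg hzp
  have hpov : pw (ovr v dbt c) v = 0 := by
    have : ovr v dbt c v = c v := by simp [ovr, not_pDesc_self v]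
    simp [pw, this, hcv]
  have wX : weight n X = W + ((k:ℝ)-2)/2 + 1 := by
    rw [hX, weight_updC n _ hvn, wovr, hpov]; norm_num
  have wY : weight n Y = W + ((k:ℝ)-2)/2 + 1/2 := by
    rw [hY, weight_updC n _ hvn, wovr, hpov]; norm_num
  have wc' : weight n c' = W + 1/2 := by
    rw [hc', weight_updC n _ hvn, hpcv]; norm_num [hW]
  -- R2 : X → Y  (drop black on v)
  have hgX : Good n X := R1.good_right
  have hgY : Good n Y := by
    have : Y = updC X v (1/2, 0) := by
      funext j
      by_cases hj : j = v
      · subst hj; simp [hY, updC]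
      · simp [hY, hX, updC, hj]
    rw [this]
    exact hgX.updC hvn hv_half hv_zero (by norm_num)
  have R2 : Reach n (weight n c + (k:ℝ)/2 + 3/2) X Y := by
    apply Reach.single hgX hgY (by rw [wX]; push_cast; linarith) (by rw [wY]; push_cast; linarith)
    left
    refine ⟨v, ?_, ?_, ?_⟩
    · rw [hX, hY, updC_self, updC_self]; norm_num
    · rw [hX, hY, updC_self, updC_self]
    · intro j hj; rw [hX, hY, updC_ne _ _ hj, updC_ne _ _ hj]
  -- R3 : Y → c'
  have hgc' : Good n c' := hg.updC hvn hv_half hv_zero (by norm_num)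
  have hzc' : ZeroOn c' (pDesc v) := by
    intro j hj
    rw [hc', updC_ne _ _ hj.ne]
    exact hzp j hj
  have hYeq : Y = ovr v dbt c' := by
    funext j
    by_cases hj : j = v
    · subst hj
      simp [hY, hc', updC, ovr, not_pDesc_self j]
    · by_cases hp : pDesc v j
      · simp [hY, hc', updC, ovr, hj, hp]
      · simp [hY, hc', updC, ovr, hj, hp]
  have R3 : Reach n (weight n c + (k:ℝ)/2 + 3/2) Y c' := by
    have := hS5 c' hgc' hzc'
    rw [← hYeq] at this
    apply this.mono
    rw [wc']; push_cast; ring_nf; linarith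
  exact (R1.mono (by push_cast; linarith)).trans (R2.trans R3)

end mainpart

section basecase
open Classical

lemma cover_leaves {h n v : ℕ} (hn : n + 1 = 2^h) (hv : Ht h 2 v)
    (c : Cfg) (hg : Good n c) (ha0 : c (2*v+1) = (0,0)) (hb0 : c (2*v+2) = (0,0)) :
    Reach n (weight n c + 2) c (updC (updC c (2*v+1) (1,0)) (2*v+2) (1,0)) := by
  obtain ⟨hla, hlb⟩ := ht_children (by omega) hv
  have hleafa := ht_leaf hn hla
  have hleafb := ht_leaf hn hlb
  have hbn : 2*v+2 < n := ht_children_lt hn (by omega) hv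
  have han : 2*v+1 < n := by omega
  set a := 2*v+1
  set b := 2*v+2
  set c1 := updC c a (1,0) with hc1
  set c2 := updC c1 b (1,0) with hc2
  have hg1 : Good n c1 := hg.updC han hv_one hv_zero (by norm_num)
  have hg2 : Good n c2 := hg1.updC hbn hv_one hv_zero (by norm_num)
  have w1 : weight n c1 = weight n c + 1 := by
    rw [hc1, weight_updC n _ han, pw_zero ha0]; norm_num
  have hpb1 : pw c1 b = 0 := by
    rw [hc1, pw_updC, if_neg (by omega : b ≠ a)]
    exact pw_zero hb0
  have w2 : weight n c2 = weight n c + 2 := by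
    rw [hc2, weight_updC n _ hbn, hpb1, w1]; norm_num; ring
  have R1 : Reach n (weight n c + 2) c c1 := by
    apply Reach.single hg hg1 (by linarith) (by linarith)
    right; right; right
    refine ⟨a, hleafa, ?_, ?_, fun j hj => updC_ne _ _ hj⟩
    · rw [hc1, updC_self, ha0]
    · rw [hc1, updC_self, ha0]; norm_num
  have R2 : Reach n (weight n c + 2) c1 c2 := by
    apply Reach.single hg1 hg2 (by linarith) (by linarith)
    right; right; right
    refine ⟨b, hleafb, ?_, ?_, fun j hj => updC_ne _ _ hj⟩
    · rw [hc2, updC_self, hc1, updC_ne _ _ (by omega : b ≠ a), hb0]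
    · rw [hc2, updC_self, hc1, updC_ne _ _ (by omega : b ≠ a), hb0]; norm_num
  exact R1.trans R2

/-- a generic "move 2" (slide) step at v with both children at pebble weight 1:
    v gets p, children's blacks drop to 0 (whites retained). -/
lemma slide_up {n v : ℕ} (hvn : v < n) (han : 2*v+1 < n) (hbn : 2*v+2 < n)
    (c2 : Cfg) (hg2 : Good n c2) (B : ℝ)
    (hpa : pw c2 (2*v+1) = 1) (hpb : pw c2 (2*v+2) = 1)
    (p : ℝ × ℝ) (hp1 : HalfVal p.1) (hb : (c2 v).1 ≤ p.1) (hp2 : p.2 = 0)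
    (hw2 : weight n c2 ≤ B)
    (hw3 : weight n c2 + (p.1 + p.2) - pw c2 v + ((c2 (2*v+1)).2 - 1) + ((c2 (2*v+2)).2 - 1) ≤ B) :
    Reach n B c2
      (updC (updC (updC c2 v p) (2*v+1) (0, (c2 (2*v+1)).2)) (2*v+2) (0, (c2 (2*v+2)).2)) := by
  set a := 2*v+1 with hadef
  set b := 2*v+2 with hbdef
  set c3 := updC (updC (updC c2 v p) a (0, (c2 a).2)) b (0, (c2 b).2) with hc3
  have hva : v ≠ a := by omega
  have hvb : v ≠ b := by omega
  have hab : a ≠ b := by omega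
  have hg3 : Good n c3 := by
    have gA := hg2.updC hvn (p := p) hp1 (hp2 ▸ hv_zero) (by rw [hp2]; simpa using hp1.le_one)
    have gB := gA.updC han (p := ((0:ℝ), (c2 a).2)) hv_zero (hg2.2 a).2
      (by simpa using ((hg2.2 a).2).le_one)
    have gC := gB.updC hbn (p := ((0:ℝ), (c2 b).2)) hv_zero (hg2.2 b).2
      (by simpa using ((hg2.2 b).2).le_one)
    rw [hc3]; exact gC
  have w3 : weight n c3
      = weight n c2 + (p.1 + p.2) - pw c2 v + ((c2 a).2 - 1) + ((c2 b).2 - 1) := by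
    rw [hc3, weight_updC n _ hbn, weight_updC n _ han, weight_updC n _ hvn]
    rw [pw_updC, pw_updC, pw_updC]
    simp only [if_neg (show a ≠ v from fun he => hva he.symm),
      if_neg (show b ≠ v from fun he => hvb he.symm), if_neg (show b ≠ a from fun he => hab he.symm)]
    rw [hpa, hpb]
    ring
  apply Reach.single hg2 hg3 hw2 (by linarith)
  right; left
  refine ⟨v, hvn, ?_, ?_, ?_, ?_, ?_⟩
  · intro j hj
    rcases child_two.1 hj with rfl | rfl
    · exact hpa
    · exact hpb
  · rw [hc3, updC_ne _ _ hvb, updC_ne _ _ hva, updC_self]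
    exact hb
  · rw [hc3, updC_ne _ _ hvb, updC_ne _ _ hva, updC_self, hp2]
  · intro j hj
    rcases child_two.1 hj with rfl | rfl
    · constructor
      · rw [hc3, updC_ne _ _ hab, updC_self]
        exact (hg2.1.1 a).1
      · rw [hc3, updC_ne _ _ hab, updC_self]
    · constructor
      · rw [hc3, updC_self]
        exact (hg2.1.1 b).1
      · rw [hc3, updC_self]
  · intro j hj1 hj2
    have hja : j ≠ a := fun he => hj2 (child_two.2 (Or.inl he))
    have hjb : j ≠ b := fun he => hj2 (child_two.2 (Or.inr he))
    rw [hc3, updC_ne _ _ hjb, updC_ne _ _ hja, updC_ne _ _ hj1]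

end basecase

section ktwo
open Classical

lemma ovr_zero {v : ℕ} {c : Cfg} (hz : ZeroOn c (pDesc v)) :
    ovr v (fun _ => ((0:ℝ),(0:ℝ))) c = c := by
  funext j
  by_cases hp : pDesc v j
  · simp only [ovr, if_pos hp]
    exact (hz j hp).symm
  · simp only [ovr, if_neg hp]

lemma case_two {h n v : ℕ} (hn : n + 1 = 2^h) (hv : Ht h 2 v) :
    FDspec n 2 v ∧ Dspec n 2 v := by
  have hbn : 2*v+2 < n := ht_children_lt hn (by omega) hv
  have han : 2*v+1 < n := by omega
  have hvn : v < n := ht_v_lt hn hv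
  set a := 2*v+1 with hadef
  set b := 2*v+2 with hbdef
  have hva : v ≠ a := by omega
  have hvb : v ≠ b := by omega
  have hab : a ≠ b := by omega
  constructor
  · refine ⟨fun _ => (0,0), fun j _ => rfl, fun j _ => rfl, fun j => ⟨rfl, hv_zero⟩, ?_, ?_, ?_⟩
    · intro c hg hz
      rw [ovr_zero hz]
      norm_num
    · intro c hg hz
      have ha0 : c a = (0,0) := hz a (pDesc_a v).descd
      have hb0 : c b = (0,0) := hz b (pDesc_b v).descd
      have hc0 : c v = (0,0) := hz v (descd_self v)
      set W := weight n c with hW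
      have R1 := cover_leaves hn hv c hg ha0 hb0
      set c2 := updC (updC c a (1,0)) b (1,0) with hc2
      have hg2 : Good n c2 := R1.good_right
      have hc2a : c2 a = (1,0) := by rw [hc2, updC_ne _ _ hab, updC_self]
      have hc2b : c2 b = (1,0) := by rw [hc2]; exact updC_self _ _ _
      have hc2v : c2 v = (0,0) := by rw [hc2, updC_ne _ _ hvb, updC_ne _ _ hva, hc0]
      have hw2 : weight n c2 ≤ W + 2 := R1.w_right
      have R2 := slide_up hvn han hbn c2 hg2 (W+2)
        (by rw [pw, hc2a]; norm_num) (by rw [pw, hc2b]; norm_num) (1,0) hv_one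
        (by rw [hc2v]; norm_num) rfl hw2
        (by rw [pw_zero hc2v, hc2a, hc2b]; norm_num; linarith)
      have hend : updC (updC (updC c2 v (1,0)) a (0, (c2 a).2)) b (0, (c2 b).2)
          = updC (ovr v (fun _ => ((0:ℝ),(0:ℝ))) c) v (1,0) := by
        rw [ovr_zero (fun j hj => hz j hj.descd)]
        funext j
        by_cases hj : j = b
        · subst hj
          rw [updC_self, updC_ne _ _ (fun he => hvb he.symm), hc2b, hb0]
        · by_cases hj2 : j = a
          · subst hj2
            rw [updC_ne _ _ hab, updC_self, updC_ne _ _ (fun he => hva he.symm), hc2a, ha0]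
          · by_cases hj3 : j = v
            · subst hj3
              rw [updC_ne _ _ hvb, updC_ne _ _ hva, updC_self, updC_self]
            · rw [updC_ne _ _ hj, updC_ne _ _ hj2, updC_ne _ _ hj3, updC_ne _ _ hj3,
                hc2, updC_ne _ _ hj, updC_ne _ _ hj2]
      rw [hend] at R2
      have hBe : W + ((2:ℕ):ℝ)/2 + 1 = W + 2 := by push_cast; ring
      rw [hBe]
      exact R1.trans R2
    · intro c hg hz
      rw [ovr_zero hz]
      exact Reach.refl hg (by push_cast; linarith)
  · intro c hg hz hcv
    have ha0 : c a = (0,0) := hz a (pDesc_a v)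
    have hb0 : c b = (0,0) := hz b (pDesc_b v)
    set W := weight n c with hW
    have R1 := cover_leaves hn hv c hg ha0 hb0
    set c2 := updC (updC c a (1,0)) b (1,0) with hc2
    have hg2 : Good n c2 := R1.good_right
    have hc2a : c2 a = (1,0) := by rw [hc2, updC_ne _ _ hab, updC_self]
    have hc2b : c2 b = (1,0) := by rw [hc2]; exact updC_self _ _ _
    have hc2v : c2 v = (0,1/2) := by rw [hc2, updC_ne _ _ hvb, updC_ne _ _ hva, hcv]
    have hw2 : weight n c2 ≤ W + 2 := R1.w_right
    have R2 := slide_up hvn han hbn c2 hg2 (W+2)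
      (by rw [pw, hc2a]; norm_num) (by rw [pw, hc2b]; norm_num) (0,0) hv_zero
      (by rw [hc2v]) rfl hw2
      (by rw [hc2a, hc2b]; simp [pw, hc2v]; linarith)
    have hend : updC (updC (updC c2 v (0,0)) a (0, (c2 a).2)) b (0, (c2 b).2)
        = updC c v (0,0) := by
      funext j
      by_cases hj : j = b
      · subst hj
        rw [updC_self, updC_ne _ _ (fun he => hvb he.symm), hc2b, hb0]
      · by_cases hj2 : j = a
        · subst hj2
          rw [updC_ne _ _ hab, updC_self, updC_ne _ _ (fun he => hva he.symm), hc2a, ha0]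
        · by_cases hj3 : j = v
          · subst hj3
            rw [updC_ne _ _ hvb, updC_ne _ _ hva, updC_self, updC_self]
          · rw [updC_ne _ _ hj, updC_ne _ _ hj2, updC_ne _ _ hj3, updC_ne _ _ hj3,
              hc2, updC_ne _ _ hj, updC_ne _ _ hj2]
    rw [hend] at R2
    have hBe : W + ((2:ℕ):ℝ)/2 + 1 = W + 2 := by push_cast; ring
    rw [hBe]
    exact R1.trans R2

end ktwo

section kstep
open Classical

lemma ovr_pd {v j : ℕ} (d c : Cfg) (h : pDesc v j) : ovr v d c j = d j := by
  simp [ovr, h]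

lemma ovr_npd {v j : ℕ} (d c : Cfg) (h : ¬ pDesc v j) : ovr v d c j = c j := by
  simp [ovr, h]

lemma case_step {h n k v : ℕ} (hn : n + 1 = 2^h) (hk : 2 ≤ k)
    (IH : ∀ u, Ht h k u → FDspec n k u ∧ Dspec n k u)
    (hv : Ht h (k+1) v) : FDspec n (k+1) v ∧ Dspec n (k+1) v := by
  obtain ⟨hta, htb⟩ := ht_children (by omega) hv
  have hbn : 2*v+2 < n := ht_children_lt hn (by omega) hv
  have han : 2*v+1 < n := by omega
  have hvn : v < n := ht_v_lt hn hv
  set a := 2*v+1 with hadef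
  set b := 2*v+2 with hbdef
  have hva : v ≠ a := by omega
  have hvb : v ≠ b := by omega
  have hab : a ≠ b := by omega
  have hpa : pDesc v a := pDesc_a v
  have hpb : pDesc v b := pDesc_b v
  have hnpba : ¬ pDesc b a := not_pDesc_b_a v
  have hnpbb : ¬ pDesc b b := not_pDesc_self b
  have hnpbv : ¬ pDesc b v := not_pDesc_b_v v
  obtain ⟨FDa, Da⟩ := IH a hta
  obtain ⟨db, hdb1, hdb2, hdb3, hbS3, hbS4, hbS5⟩ := IH b htb |>.1
  have Ha := Hlem (ht_v_lt hn hta) FDa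
  set dbt : Cfg := fun j => if j = a then ((0:ℝ),(1/2:ℝ)) else if pDesc b j then db j else (0,0)
    with hdbt
  have hdbt_a : dbt a = (0, 1/2) := by rw [hdbt]; simp
  have hdbt_b : dbt b = (0, 0) := by
    rw [hdbt]; simp only [if_neg (show b ≠ a from fun he => hab he.symm), if_neg hnpbb]
  have hdbt_pb : ∀ j, pDesc b j → dbt j = db j := by
    intro j hj
    rw [hdbt]; simp only [if_neg (show j ≠ a from pDesc_b_ne_a hj), if_pos hj]
  have hdbt_other : ∀ j, j ≠ a → ¬ pDesc b j → dbt j = (0,0) := by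
    intro j h1 h2
    rw [hdbt]; simp only [if_neg h1, if_neg h2]
  -- the key configuration identity
  have Ekey : ∀ c : Cfg, ZeroOn c (pDesc v) →
      ovr v dbt c = ovr b db (updC c a (0,1/2)) := by
    intro c hz
    funext j
    by_cases hja : j = a
    · subst hja
      rw [ovr_pd _ _ hpa, hdbt_a, ovr_npd _ _ hnpba, updC_self]
    · by_cases hjb : pDesc b j
      · rw [ovr_pd _ _ (pDesc_b_sub hjb), hdbt_pb j hjb, ovr_pd _ _ hjb]
      · by_cases hjv : pDesc v j
        · rw [ovr_pd _ _ hjv, hdbt_other j hja hjb, ovr_npd _ _ hjb, updC_ne _ _ hja,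
            hz j hjv]
        · rw [ovr_npd _ _ hjv, ovr_npd _ _ hjb, updC_ne _ _ hja]
  -- the build procedure, shared between S4 and D
  have Rbuild : ∀ c : Cfg, Good n c → ZeroOn c (Descd a) → ZeroOn c (Descd b) →
      Reach n (weight n c + (k:ℝ)/2 + 3/2) c
        (updC (updC (ovr b db (updC c a (1/2,0))) b (1,0)) a (1/2,1/2)) ∧
      weight n (updC (updC (ovr b db (updC c a (1/2,0))) b (1,0)) a (1/2,1/2))
        = weight n c + (k:ℝ)/2 + 1 := by
    intro c hg hza hzb
    have ha0 : c a = (0,0) := hza a (descd_self a)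
    have hb0 : c b = (0,0) := hzb b (descd_self b)
    set W := weight n c with hW
    set u1 := updC c a (1/2, 0) with hu1
    set o2 := ovr b db u1 with ho2
    set u2 := updC o2 b (1,0) with hu2
    set u3 := updC u2 a (1/2,1/2) with hu3
    have R1 : Reach n (W + (k:ℝ)/2 + 3/2) c u1 := Ha c hg hza
    have hgu1 : Good n u1 := R1.good_right
    have wu1 : weight n u1 = W + 1/2 := by
      rw [hu1, weight_updC n _ han, pw_zero ha0]; norm_num [hW]
    have hzu1b : ZeroOn u1 (pDesc b) := by
      intro j hj
      rw [hu1, updC_ne _ _ (pDesc_b_ne_a hj)]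
      exact hzb j hj.descd
    have hzu1b' : ZeroOn u1 (Descd b) := by
      intro j hj
      have hja : j ≠ a := by
        rintro rfl
        exact (not_descd_b_a v) hj
      rw [hu1, updC_ne _ _ hja]
      exact hzb j hj
    have wo2 : weight n o2 = W + 1/2 + ((k:ℝ)-2)/2 := by
      rw [ho2, hbS3 u1 hgu1 hzu1b, wu1]
    have ho2a : o2 a = (1/2, 0) := by
      rw [ho2, ovr_npd _ _ hnpba, hu1, updC_self]
    have ho2b : o2 b = (0, 0) := by
      rw [ho2, ovr_npd _ _ hnpbb]
      exact hzu1b' b (descd_self b)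
    have R2 : Reach n (W + (k:ℝ)/2 + 3/2) u1 u2 := by
      have := hbS4 u1 hgu1 hzu1b'
      rw [← ho2, ← hu2] at this
      exact this.mono (by rw [wu1]; push_cast; linarith)
    have hgu2 : Good n u2 := R2.good_right
    have wu2 : weight n u2 = W + 1/2 + ((k:ℝ)-2)/2 + 1 := by
      rw [hu2, weight_updC n _ hbn, pw_zero ho2b, wo2]; norm_num
    have hu2a : u2 a = (1/2, 0) := by rw [hu2, updC_ne _ _ hab, ho2a]
    have hgu3 : Good n u3 := hgu2.updC han hv_half hv_half (by norm_num)
    have wu3 : weight n u3 = W + (k:ℝ)/2 + 1 := by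
      rw [hu3, weight_updC n _ han, wu2, pw, hu2a]
      push_cast; ring
    have R3 : Reach n (W + (k:ℝ)/2 + 3/2) u2 u3 := by
      apply Reach.single hgu2 hgu3 (by rw [wu2]; push_cast; linarith)
        (by rw [wu3]; push_cast; linarith)
      right; right; left
      refine ⟨a, ?_, ?_, ?_, fun j hj => by rw [hu3, updC_ne _ _ hj]⟩
      · rw [hu3, updC_self, hu2a]
      · rw [hu3, updC_self, hu2a]; norm_num
      · rw [pw, hu3, updC_self]; norm_num
    exact ⟨(R1.trans R2).trans R3, wu3⟩
  refine ⟨⟨dbt, ?_, ?_, ?_, ?_, ?_, ?_⟩, ?_⟩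
  · -- S1 : support in pDesc v
    intro j hj
    exact hdbt_other j (fun he => hj (he ▸ hpa)) (fun hp => hj (pDesc_b_sub hp))
  · -- S2 : support below n
    intro j hj
    by_cases hja : j = a
    · omega
    · by_cases hjb : pDesc b j
      · rw [hdbt_pb j hjb]; exact hdb2 j hj
      · exact hdbt_other j hja hjb
  · -- S2' : half values
    intro j
    by_cases hja : j = a
    · subst hja; rw [hdbt_a]; exact ⟨rfl, hv_half⟩
    · by_cases hjb : pDesc b j
      · rw [hdbt_pb j hjb]; exact hdb3 j
      · rw [hdbt_other j hja hjb]; exact ⟨rfl, hv_zero⟩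
  · -- S3 : weight of debts
    intro c hg hz
    rw [Ekey c hz]
    have hgca : Good n (updC c a (0,1/2)) := hg.updC han hv_zero hv_half (by norm_num)
    have hzca : ZeroOn (updC c a (0,1/2)) (pDesc b) := by
      intro j hj
      rw [updC_ne _ _ (pDesc_b_ne_a hj)]
      exact hz j (pDesc_b_sub hj)
    rw [hbS3 _ hgca hzca, weight_updC n _ han, pw_zero (hz a hpa)]
    push_cast; ring
  · -- S4 : the build
    intro c hg hz
    have hza : ZeroOn c (Descd a) := fun j hj => hz j (descd_a hj).descd
    have hzb : ZeroOn c (Descd b) := fun j hj => hz j (descd_b hj).descd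
    obtain ⟨RB, wu3⟩ := Rbuild c hg hza hzb
    set W := weight n c with hW
    set u3 := updC (updC (ovr b db (updC c a (1/2,0))) b (1,0)) a (1/2,1/2) with hu3
    have hgu3 : Good n u3 := RB.good_right
    have hu3a : u3 a = (1/2,1/2) := by rw [hu3, updC_self]
    have hu3b : u3 b = (1,0) := by rw [hu3, updC_ne _ _ (fun he => hab he.symm), updC_self]
    have hu3v : u3 v = (0,0) := by
      rw [hu3, updC_ne _ _ hva, updC_ne _ _ hvb, ovr_npd _ _ hnpbv, updC_ne _ _ hva]
      exact hz v (descd_self v)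
    have R4 := slide_up hvn han hbn u3 hgu3 (W + (k:ℝ)/2 + 3/2)
      (by rw [pw, hu3a]; norm_num) (by rw [pw, hu3b]; norm_num) (1,0) hv_one
      (by rw [hu3v]; norm_num) rfl (by rw [wu3]; push_cast; linarith)
      (by rw [wu3, pw, hu3v, hu3a, hu3b]; push_cast; linarith)
    have hend : updC (updC (updC u3 v (1,0)) a (0, (u3 a).2)) b (0, (u3 b).2)
        = updC (ovr v dbt c) v (1,0) := by
      funext j
      by_cases hjb : j = b
      · subst hjb
        rw [updC_self, hu3b, updC_ne _ _ (fun he => hvb he.symm), ovr_pd _ _ hpb, hdbt_b]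
      · by_cases hja : j = a
        · subst hja
          rw [updC_ne _ _ hab, updC_self, hu3a,
            updC_ne _ _ (fun he => hva he.symm), ovr_pd _ _ hpa, hdbt_a]
        · by_cases hjv : j = v
          · subst hjv
            rw [updC_ne _ _ hvb, updC_ne _ _ hva, updC_self, updC_self]
          · rw [updC_ne _ _ hjb, updC_ne _ _ hja, updC_ne _ _ hjv, updC_ne _ _ hjv, hu3,
              updC_ne _ _ hja, updC_ne _ _ hjb]
            by_cases hjpb : pDesc b j
            · rw [ovr_pd _ _ hjpb, ovr_pd _ _ (pDesc_b_sub hjpb), hdbt_pb j hjpb]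
            · rw [ovr_npd _ _ hjpb, updC_ne _ _ hja]
              by_cases hjpv : pDesc v j
              · rw [ovr_pd _ _ hjpv, hdbt_other j hja hjpb, hz j hjpv.descd]
              · rw [ovr_npd _ _ hjpv]
    rw [hend] at R4
    have hB : W + ((k:ℕ)+1:ℝ)/2 + 1 = W + (k:ℝ)/2 + 3/2 := by push_cast; ring
    have := RB.trans R4
    apply this.mono
    push_cast
    linarith
  · -- S5 : cleanup of debts
    intro c hg hz
    set W := weight n c with hW
    rw [Ekey c hz]
    set ca := updC c a (0,1/2) with hca
    have hgca : Good n ca := hg.updC han hv_zero hv_half (by norm_num)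
    have wca : weight n ca = W + 1/2 := by
      rw [hca, weight_updC n _ han, pw_zero (hz a hpa)]; norm_num [hW]
    have hzca : ZeroOn ca (pDesc b) := by
      intro j hj
      rw [hca, updC_ne _ _ (pDesc_b_ne_a hj)]
      exact hz j (pDesc_b_sub hj)
    have hzca' : ZeroOn ca (pDesc a) := by
      intro j hj
      rw [hca, updC_ne _ _ hj.ne]
      exact hz j (pDesc_a_sub hj)
    have R1 := hbS5 ca hgca hzca
    have R2 := Da ca hgca hzca' (by rw [hca, updC_self])
    have hend : updC ca a (0,0) = c := by
      funext j
      by_cases hja : j = a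
      · subst hja
        rw [updC_self, hz a hpa]
      · rw [updC_ne _ _ hja, hca, updC_ne _ _ hja]
    rw [hend] at R2
    exact (R1.trans R2).mono (by rw [wca]; push_cast; linarith)
  · -- D : discharge a half white on v
    intro c hg hz hcv
    set W := weight n c with hW
    have hza : ZeroOn c (Descd a) := fun j hj => hz j (descd_a hj)
    have hzb : ZeroOn c (Descd b) := fun j hj => hz j (descd_b hj)
    obtain ⟨RB, wu3⟩ := Rbuild c hg hza hzb
    set u3 := updC (updC (ovr b db (updC c a (1/2,0))) b (1,0)) a (1/2,1/2) with hu3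
    have hgu3 : Good n u3 := RB.good_right
    have hu3a : u3 a = (1/2,1/2) := by rw [hu3, updC_self]
    have hu3b : u3 b = (1,0) := by rw [hu3, updC_ne _ _ (fun he => hab he.symm), updC_self]
    have hu3v : u3 v = (0,1/2) := by
      rw [hu3, updC_ne _ _ hva, updC_ne _ _ hvb, ovr_npd _ _ hnpbv, updC_ne _ _ hva, hcv]
    have R4 := slide_up hvn han hbn u3 hgu3 (W + (k:ℝ)/2 + 3/2)
      (by rw [pw, hu3a]; norm_num) (by rw [pw, hu3b]; norm_num) (0,0) hv_zero
      (by rw [hu3v]) rfl (by rw [wu3]; push_cast; linarith)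
      (by rw [wu3, pw, hu3v, hu3a, hu3b]; push_cast; linarith)
    set w1 := updC (updC c v (0,0)) a (0,1/2) with hw1
    have hgw1 : Good n w1 :=
      (hg.updC hvn hv_zero hv_zero (by norm_num)).updC han hv_zero hv_half (by norm_num)
    have ww1 : weight n w1 = W := by
      rw [hw1, weight_updC n _ han, weight_updC n _ hvn, pw_updC,
        if_neg (show a ≠ v from fun he => hva he.symm), pw_zero (hz a hpa), pw, hcv]
      norm_num [hW]
    have hend : updC (updC (updC u3 v (0,0)) a (0, (u3 a).2)) b (0, (u3 b).2)
        = ovr b db w1 := by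
      funext j
      by_cases hjb : j = b
      · subst hjb
        rw [updC_self, hu3b, ovr_npd _ _ hnpbb, hw1,
          updC_ne _ _ (fun he => hab he.symm), updC_ne _ _ (fun he => hvb he.symm),
          hz b hpb]
      · by_cases hja : j = a
        · subst hja
          rw [updC_ne _ _ hab, updC_self, hu3a, ovr_npd _ _ hnpba, hw1, updC_self]
        · by_cases hjv : j = v
          · subst hjv
            rw [updC_ne _ _ hvb, updC_ne _ _ hva, updC_self, ovr_npd _ _ hnpbv, hw1,
              updC_ne _ _ hva, updC_self]
          · rw [updC_ne _ _ hjb, updC_ne _ _ hja, updC_ne _ _ hjv, hu3,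
              updC_ne _ _ hja, updC_ne _ _ hjb]
            by_cases hjpb : pDesc b j
            · rw [ovr_pd _ _ hjpb, ovr_pd _ _ hjpb]
            · rw [ovr_npd _ _ hjpb, updC_ne _ _ hja, ovr_npd _ _ hjpb, hw1,
                updC_ne _ _ hja, updC_ne _ _ hjv]
    rw [hend] at R4
    have hzw1b : ZeroOn w1 (pDesc b) := by
      intro j hj
      rw [hw1, updC_ne _ _ (pDesc_b_ne_a hj), updC_ne _ _ (pDesc_b_ne_v hj)]
      exact hz j (pDesc_b_sub hj)
    have hzw1a : ZeroOn w1 (pDesc a) := by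
      intro j hj
      rw [hw1, updC_ne _ _ hj.ne, updC_ne _ _ (pDesc_a_ne_v hj)]
      exact hz j (pDesc_a_sub hj)
    have R5 := hbS5 w1 hgw1 hzw1b
    have R6 := Da w1 hgw1 hzw1a (by rw [hw1, updC_self])
    have hend2 : updC w1 a (0,0) = updC c v (0,0) := by
      funext j
      by_cases hja : j = a
      · subst hja
        rw [updC_self, updC_ne _ _ (fun he => hva he.symm), hz a hpa]
      · rw [updC_ne _ _ hja, hw1, updC_ne _ _ hja]
    rw [hend2] at R6
    have hB : W + ((k:ℕ)+1:ℝ)/2 + 1 = W + (k:ℝ)/2 + 3/2 := by push_cast; ring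
    have R56 : Reach n (W + (k:ℝ)/2 + 3/2) (ovr b db w1) (updC c v (0,0)) := by
      refine (R5.mono ?_).trans (R6.mono ?_) <;> rw [ww1] <;> push_cast <;> linarith
    have := (RB.trans R4).trans R56
    apply this.mono
    push_cast
    linarith

end kstep

section final
open Classical

lemma main_spec (h n : ℕ) (hn : n + 1 = 2^h) :
    ∀ k, 2 ≤ k → ∀ v, Ht h k v → FDspec n k v ∧ Dspec n k v := by
  intro k hk
  induction k, hk using Nat.le_induction with
  | base => intro v hv; exact case_two hn hv
  | succ m hm ih => intro v hv; exact case_step hn hm ih hv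

lemma half_upper_binary_aux (h : ℕ) (hh : 2 ≤ h) :
    ∃ T c, HPebbling 2 (treeSize 2 h) T c ∧ EmptyCfg (c 0) ∧ EmptyCfg (c T) ∧
      (∃ t, t ≤ T ∧ pw (c t) 0 = 1) ∧
      ∀ t, t ≤ T → weight (treeSize 2 h) (c t) ≤ (h : ℝ) / 2 + 1 := by
  set n := treeSize 2 h with hndef
  have hn : n + 1 = 2^h := treeSize_two h
  obtain ⟨dbt, hd1, hd2, hd3, S3, S4, S5⟩ := (main_spec h n hn h hh 0 (ht_root (by omega))).1
  set zero : Cfg := fun _ => ((0:ℝ),(0:ℝ)) with hzero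
  have hgz : Good n zero := by
    refine ⟨⟨fun i => ?_, fun i _ => rfl⟩, fun i => ⟨hv_zero, hv_zero⟩⟩
    simp [hzero, pw]
  have hzz : ZeroOn zero (Descd 0) := fun j _ => rfl
  have hzz' : ZeroOn zero (pDesc 0) := fun j _ => rfl
  have W0 : weight n zero = 0 := by
    simp [weight, pw, hzero]
  have R1 := S4 zero hgz hzz
  have R2 := S5 zero hgz hzz'
  set Z1 := updC (ovr 0 dbt zero) 0 (1,0) with hZ1
  set Z2 := ovr 0 dbt zero with hZ2
  have hgZ1 : Good n Z1 := R1.good_right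
  have hgZ2 : Good n Z2 := R2.good_left
  have wZ2 : weight n Z2 ≤ weight n zero + (h:ℝ)/2 + 1 := R2.w_left
  have wZ1 : weight n Z1 ≤ weight n zero + (h:ℝ)/2 + 1 := R1.w_right
  have Rdrop : Reach n (weight n zero + (h:ℝ)/2 + 1) Z1 Z2 := by
    apply Reach.single hgZ1 hgZ2 wZ1 wZ2
    left
    refine ⟨0, ?_, ?_, fun j hj => by rw [hZ1, updC_ne _ _ hj]⟩
    · rw [hZ1, updC_self, hZ2, ovr_npd _ _ (not_pDesc_self 0)]
      norm_num [hzero]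
    · rw [hZ1, updC_self, hZ2, ovr_npd _ _ (not_pDesc_self 0)]
  have Rall2 : Reach n (weight n zero + (h:ℝ)/2 + 1) Z1 zero := Rdrop.trans R2
  obtain ⟨T, s, e0, e1, g, m, t0, ht0, hmid⟩ := R1.concat Rall2
  refine ⟨T, s, ⟨fun t ht => (g t ht).1, m⟩, ?_, ?_, ⟨t0, ht0, ?_⟩, fun t ht => ?_⟩
  · rw [e0]; intro i; rfl
  · rw [e1]; intro i; rfl
  · rw [hmid, hZ1, pw, updC_self]
    norm_num
  · refine le_trans (g t ht).2 ?_
    rw [W0]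
    norm_num

end final

/-- there is a half root-pebbling of the binary tree of height h ≥ 2
whose total weight never exceeds h/2 + 1. -/
theorem half_upper_binary (h : ℕ) (hh : 2 ≤ h) :
    ∃ T c, HPebbling 2 (treeSize 2 h) T c ∧ EmptyCfg (c 0) ∧ EmptyCfg (c T) ∧
      (∃ t, t ≤ T ∧ pw (c t) 0 = 1) ∧
      ∀ t, t ≤ T → weight (treeSize 2 h) (c t) ≤ (h : ℝ) / 2 + 1 :=
  half_upper_binary_aux h hh
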